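/- Let k be a field, n a positive integer, and q ∈ k* a primitive n-th root of unity. Then the function φ on the cyclic group ℤ/nℤ defined by φ(x, y, z) = q^(x̄·ȳ·z̄), where x̄ ∈ {0,1,…,n−1} denotes the representative of x ∈ ℤ/nℤ, is a well-defined normalized 3-cocycle on ℤ/nℤ with coefficients in k*. Moreover, φ is a 3-coboundary if and only if q^(n(n−1)/2) = 1. -/

import Mathlib

def IsCocycle {k : Type*} [Field k] {G : Type*} [Group G] (φ : G → G → G → kˣ) : Prop :=
  ∀ x y z t : G, φ y z t * φ x (y * z) t * φ x y z = φ (x * y) z t * φ x y (z * t)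

def IsNormalized {k : Type*} [Field k] {G : Type*} [Group G] (φ : G → G → G → kˣ) : Prop :=
  ∀ x z : G, φ x 1 z = 1

def d2 {k : Type*} [Field k] {G : Type*} [Group G] (g : G → G → kˣ) : G → G → G → kˣ :=
  fun x y z => g y z * (g (x * y) z)⁻¹ * g x (y * z) * (g x y)⁻¹

def IsCoboundary {k : Type*} [Field k] {G : Type*} [Group G] (φ : G → G → G → kˣ) : Prop :=
  ∃ g : G → G → kˣ, φ = d2 g

private lemma aux_group19 {α : Type*} [CommGroup α] {a b c d A : α}
    (h : a * c = A * (b * d)) : A = a * b⁻¹ * c * d⁻¹ := by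
  have h2 : A = a * c * (b * d)⁻¹ := by rw [h]; group
  have h3 : a * b⁻¹ * c * d⁻¹ = a * c * (b * d)⁻¹ := by
    simp [mul_inv, mul_assoc, mul_comm, mul_left_comm]
  exact h2.trans h3.symm

theorem statement19 (k : Type*) [Field k] (n : ℕ) (hn : 0 < n) (q : kˣ)
    (hq1 : q ^ n = 1) (hq2 : ∀ m : ℕ, 0 < m → m < n → q ^ m ≠ 1)
    (φ : Multiplicative (ZMod n) → Multiplicative (ZMod n) → Multiplicative (ZMod n) → kˣ)
    (hφ : ∀ x y z : Multiplicative (ZMod n),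
      φ x y z = q ^ ((Multiplicative.toAdd x).val * (Multiplicative.toAdd y).val
        * (Multiplicative.toAdd z).val)) :
    IsCocycle φ ∧ IsNormalized φ ∧
    (IsCoboundary φ ↔ q ^ (n * (n - 1) / 2) = 1) := by
  haveI : NeZero n := ⟨hn.ne'⟩
  have hord : orderOf q = n := by
    have h1 : orderOf q ∣ n := orderOf_dvd_of_pow_eq_one hq1
    have hfin : IsOfFinOrder q := isOfFinOrder_iff_pow_eq_one.2 ⟨n, hn, hq1⟩
    rcases lt_or_eq_of_le (Nat.le_of_dvd hn h1) with h | h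
    · exact absurd (pow_orderOf_eq_one q) (hq2 _ hfin.orderOf_pos h)
    · exact h
  have key : ∀ a b : ℕ, q ^ a = q ^ b ↔ (a : ZMod n) = (b : ZMod n) := by
    intro a b
    rw [pow_eq_pow_iff_modEq, hord, ← ZMod.natCast_eq_natCast_iff]
  have hcoc : IsCocycle φ := by
    intro x y z t
    simp only [hφ, toAdd_mul, ← pow_add]
    rw [key]
    push_cast [ZMod.natCast_val, ZMod.cast_id]
    ring
  refine ⟨hcoc, ?_, ?_, ?_⟩
  · intro x z
    rw [hφ]
    simp
  · -- coboundary → q ^ (n*(n-1)/2) = 1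
    rintro ⟨g, hg⟩
    rcases eq_or_lt_of_le (Nat.succ_le_of_lt hn) with h1 | h1
    · have : n = 1 := h1.symm
      subst this
      norm_num
    · set a : Multiplicative (ZMod n) := Multiplicative.ofAdd 1 with ha
      have hprod1 : (∏ y : Multiplicative (ZMod n), φ a y a) = 1 := by
        rw [hg]
        simp only [d2]
        simp only [Finset.prod_mul_distrib, Finset.prod_inv_distrib]
        have e1 : (∏ y : Multiplicative (ZMod n), g (a * y) a)
            = ∏ y : Multiplicative (ZMod n), g y a :=
          Fintype.prod_equiv (Equiv.mulLeft a) _ _ (fun y => rfl)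
        have e2 : (∏ y : Multiplicative (ZMod n), g a (y * a))
            = ∏ y : Multiplicative (ZMod n), g a y :=
          Fintype.prod_equiv (Equiv.mulRight a) _ _ (fun y => rfl)
        rw [e1, e2]
        group
      have hsum : (∑ y : ZMod n, y.val) = n * (n - 1) / 2 := by
        rw [← Finset.sum_range_id]
        refine Finset.sum_nbij' (fun y => y.val) (fun i => (i : ZMod n)) ?_ ?_ ?_ ?_ ?_
        · intro y _; exact Finset.mem_range.2 (ZMod.val_lt y)
        · intro i _; exact Finset.mem_univ _
        · intro y _; exact ZMod.natCast_rightInverse y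
        · intro i hi; exact ZMod.val_cast_of_lt (Finset.mem_range.1 hi)
        · intro y _; rfl
      have hprod2 : (∏ y : Multiplicative (ZMod n), φ a y a) = q ^ (n * (n - 1) / 2) := by
        simp only [hφ]
        rw [Finset.prod_pow_eq_pow_sum]
        congr 1
        haveI : Fact (1 < n) := ⟨h1⟩
        have hva : (Multiplicative.toAdd a).val = 1 := by
          rw [ha]
          simpa using ZMod.val_one n
        calc (∑ y : Multiplicative (ZMod n),
              (Multiplicative.toAdd a).val * (Multiplicative.toAdd y).val
                * (Multiplicative.toAdd a).val)
            = ∑ y : Multiplicative (ZMod n), (Multiplicative.toAdd y).val := by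
              simp [hva]
          _ = ∑ y : ZMod n, y.val :=
              Fintype.sum_equiv Multiplicative.toAdd _ _ (fun y => rfl)
          _ = n * (n - 1) / 2 := hsum
      rw [← hprod2, hprod1]
  · -- q ^ (n*(n-1)/2) = 1 → coboundary
    intro hcond
    have hodd : Odd n := by
      by_contra he
      rw [Nat.not_odd_iff_even] at he
      obtain ⟨r, hr⟩ := he
      have hr0 : 0 < r := by omega
      have hdvd : n ∣ n * (n - 1) / 2 := by
        have hd := orderOf_dvd_of_pow_eq_one hcond
        rwa [hord] at hd
      have h2 : n * (n - 1) / 2 = r * (n - 1) := by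
        have hmul : n * (n - 1) = r * (n - 1) * 2 := by rw [hr]; ring
        rw [hmul, Nat.mul_div_cancel _ two_pos]
      rw [h2] at hdvd
      obtain ⟨c, hc⟩ := hdvd
      have : n - 1 = 2 * c := by
        have : r * (n - 1) = r * (2 * c) := by rw [hc, hr]; ring
        exact Nat.eq_of_mul_eq_mul_left hr0 this
      omega
    obtain ⟨s, hs⟩ := hodd
    have hm : ((s + 1 : ℕ) : ZMod n) * 2 = 1 := by
      have h1 : (2 * (s + 1) : ℕ) = n + 1 := by omega
      calc ((s + 1 : ℕ) : ZMod n) * 2 = ((2 * (s + 1) : ℕ) : ZMod n) := by push_cast; ring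
        _ = ((n + 1 : ℕ) : ZMod n) := by rw [h1]
        _ = 1 := by push_cast; simp
    refine ⟨fun x y => q ^ ((s + 1) * (Multiplicative.toAdd x).val
      * (Multiplicative.toAdd y).val ^ 2), ?_⟩
    funext x y z
    rw [hφ]
    simp only [d2, toAdd_mul]
    refine aux_group19 ?_
    rw [← pow_add, ← pow_add, ← pow_add, key]
    push_cast [ZMod.natCast_val, ZMod.cast_id] at hm ⊢
    linear_combination (((Multiplicative.toAdd x : ZMod n))
      * (Multiplicative.toAdd y) * (Multiplicative.toAdd z)) * hm
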